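/- Let (D, ρ) be a probability space and H a separable real Hilbert space with a continuous linear embedding J : H → L_∞(ρ). Let (ψ_k)_{k∈ℕ} be an orthonormal basis of H whose images J(ψ_k) are pairwise orthogonal in L₂(ρ), and suppose the singular values σ_k := ‖J ψ_k‖_{L₂(ρ)} are nonincreasing in k. Then for every n ∈ ℕ, every family of continuous linear functionals L₁, …, L_n on H, and every map φ : ℝⁿ → L_∞(ρ) (not necessarily linear or continuous), one has sup_{f ∈ H, ‖f‖_H ≤ 1} ‖ J f − φ(L₁(f), …, L_n(f)) ‖_{L_∞(ρ)} ≥ √( Σ_{k>n} σ_k² ). -/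

import Mathlib

open MeasureTheory ProbabilityTheory
open scoped ENNReal NNReal

section Aux

open Finset Module
open scoped RealInnerProductSpace

-- combinatorial inequality
lemma aux_sum_ineq (n m : ℕ) (σ : ℕ → ℝ) (hmono : Antitone σ) (hσ0 : ∀ k, 0 ≤ σ k)
    (t : ℕ → ℝ) (ht0 : ∀ k, 0 ≤ t k) (ht1 : ∀ k, t k ≤ 1)
    (hsum : (m : ℝ) ≤ ∑ k ∈ range (n + m), t k) :
    ∑ k ∈ Ico n (n + m), σ k ^ 2 ≤ ∑ k ∈ range (n + m), t k * σ k ^ 2 := by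
  have hsplit : ∑ k ∈ range (n + m), t k * σ k ^ 2
      = ∑ k ∈ range n, t k * σ k ^ 2 + ∑ k ∈ Ico n (n + m), t k * σ k ^ 2 := by
    rw [range_eq_Ico, ← Finset.sum_Ico_consecutive _ (Nat.zero_le n) (Nat.le_add_right n m),
      ← range_eq_Ico]
  have h1 : ∑ k ∈ Ico n (n + m), (1 - t k) * σ k ^ 2
      ≤ ∑ k ∈ Ico n (n + m), (1 - t k) * σ n ^ 2 := by
    apply Finset.sum_le_sum
    intro k hk
    have hkn : n ≤ k := (Finset.mem_Ico.1 hk).1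
    have : σ k ^ 2 ≤ σ n ^ 2 := by
      have := hmono hkn
      nlinarith [hσ0 k, hσ0 n]
    nlinarith [ht1 k]
  have h2 : ∑ k ∈ range n, t k * σ n ^ 2 ≤ ∑ k ∈ range n, t k * σ k ^ 2 := by
    apply Finset.sum_le_sum
    intro k hk
    have hkn : k ≤ n := le_of_lt (Finset.mem_range.1 hk)
    have : σ n ^ 2 ≤ σ k ^ 2 := by
      have := hmono hkn
      nlinarith [hσ0 k, hσ0 n]
    nlinarith [ht0 k]
  have hcard : ∑ k ∈ Ico n (n + m), (1 - t k) * σ n ^ 2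
      = ((m : ℝ) - ∑ k ∈ Ico n (n + m), t k) * σ n ^ 2 := by
    rw [← Finset.sum_mul, Finset.sum_sub_distrib]
    simp [Nat.Ico_eq_range', Finset.sum_const]
  have hsum' : (m : ℝ) - ∑ k ∈ Ico n (n + m), t k ≤ ∑ k ∈ range n, t k := by
    have : ∑ k ∈ range n, t k + ∑ k ∈ Ico n (n + m), t k = ∑ k ∈ range (n+m), t k := by
      exact Finset.sum_range_add_sum_Ico _ (Nat.le_add_right n m)
    linarith
  have h3 : ((m : ℝ) - ∑ k ∈ Ico n (n + m), t k) * σ n ^ 2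
      ≤ (∑ k ∈ range n, t k) * σ n ^ 2 := by
    apply mul_le_mul_of_nonneg_right hsum' (by positivity)
  have h4 : ∑ k ∈ Ico n (n + m), σ k ^ 2
      = ∑ k ∈ Ico n (n + m), (1 - t k) * σ k ^ 2 + ∑ k ∈ Ico n (n + m), t k * σ k ^ 2 := by
    rw [← Finset.sum_add_distrib]; apply Finset.sum_congr rfl; intros; ring
  have h5 : (∑ k ∈ range n, t k) * σ n ^ 2 = ∑ k ∈ range n, t k * σ n ^ 2 :=
    Finset.sum_mul _ _ _
  calc ∑ k ∈ Ico n (n + m), σ k ^ 2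
      = ∑ k ∈ Ico n (n + m), (1 - t k) * σ k ^ 2 + ∑ k ∈ Ico n (n + m), t k * σ k ^ 2 := h4
    _ ≤ ((m : ℝ) - ∑ k ∈ Ico n (n + m), t k) * σ n ^ 2 + ∑ k ∈ Ico n (n + m), t k * σ k ^ 2 := by
        rw [← hcard]; exact add_le_add_left h1 _
    _ ≤ ∑ k ∈ range n, t k * σ k ^ 2 + ∑ k ∈ Ico n (n + m), t k * σ k ^ 2 := by
        refine add_le_add_left ?_ _
        exact le_trans h3 (le_trans (le_of_eq h5) h2)
    _ = ∑ k ∈ range (n + m), t k * σ k ^ 2 := hsplit.symm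

lemma aux_basis {H : Type*} [NormedAddCommGroup H] [InnerProductSpace ℝ H]
    (ψ : ℕ → H) (hψ : Orthonormal ℝ ψ) (n m : ℕ) (L : Fin n → H →L[ℝ] ℝ) :
    ∃ (d : ℕ) (e : Fin d → H), m ≤ d ∧ Orthonormal ℝ e ∧ (∀ j i, L i (e j) = 0) ∧
      ∀ j, ∃ a : Fin (n + m) → ℝ, ∑ i, a i • ψ (i : ℕ) = e j := by
  classical
  set K := n + m with hK
  have hψK : Orthonormal ℝ (fun i : Fin K => ψ (i : ℕ)) :=
    hψ.comp _ Fin.val_injective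
  set V : Submodule ℝ H := Submodule.span ℝ (Set.range fun i : Fin K => ψ (i : ℕ)) with hVdef
  haveI : FiniteDimensional ℝ V := FiniteDimensional.span_of_finite ℝ (Set.finite_range _)
  have hV : finrank ℝ V = K := by
    rw [hVdef, finrank_span_eq_card hψK.linearIndependent, Fintype.card_fin]
  set Φ : H →ₗ[ℝ] (Fin n → ℝ) := LinearMap.pi (fun i => (L i : H →ₗ[ℝ] ℝ)) with hΦ
  set Φ' : V →ₗ[ℝ] (Fin n → ℝ) := Φ.comp V.subtype with hΦ'
  set N : Submodule ℝ V := LinearMap.ker Φ' with hN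
  have hd : m ≤ finrank ℝ N := by
    have hrk := LinearMap.finrank_range_add_finrank_ker Φ'
    rw [hV] at hrk
    rw [← hN] at hrk
    have hr : finrank ℝ (LinearMap.range Φ') ≤ n := by
      have := Submodule.finrank_le (LinearMap.range Φ')
      simpa [Module.finrank_fintype_fun_eq_card] using this
    omega
  set d := finrank ℝ N with hdd
  set b := stdOrthonormalBasis ℝ N with hb
  refine ⟨d, fun j => ((b j : V) : H), hd, ?_, ?_, ?_⟩
  · have hb1 := b.orthonormal
    rw [orthonormal_iff_ite] at hb1 ⊢
    intro j j'
    have := hb1 j j'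
    rwa [Submodule.coe_inner, Submodule.coe_inner] at this
  · intro j i
    have hker : Φ' (b j) = 0 := (b j).2
    have h2 := congrFun hker i
    rw [hΦ'] at h2
    simp only [LinearMap.comp_apply, Submodule.subtype_apply, hΦ, LinearMap.pi_apply,
      ContinuousLinearMap.coe_coe, Pi.zero_apply] at h2
    exact h2
  · intro j
    have hmem : ((b j : V) : H) ∈ V := (b j : V).2
    exact (Submodule.mem_span_range_iff_exists_fun ℝ).1 hmem


variable {D : Type*} [MeasurableSpace D] {ρ : Measure D}

-- a.e. bound by L∞ norm
lemma aux_linfty_ae (h : Lp ℝ ⊤ ρ) : ∀ᵐ x ∂ρ, |h x| ≤ ‖h‖ := by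
  filter_upwards [ae_le_eLpNormEssSup (f := ⇑h) (μ := ρ)] with x hx
  have h1 : (‖h x‖₊ : ℝ≥0∞) ≤ eLpNorm h ⊤ ρ := by rwa [eLpNorm_exponent_top]
  have h2 := ENNReal.toReal_mono (Lp.eLpNorm_ne_top h) h1
  simpa [Lp.norm_def, Real.norm_eq_abs] using h2

lemma aux_linfty_int [IsFiniteMeasure ρ] (h : Lp ℝ ⊤ ρ) : Integrable (⇑h) ρ :=
  memLp_one_iff_integrable.mp ((Lp.memLp h).mono_exponent le_top)

lemma aux_mul_int [IsFiniteMeasure ρ] (h1 h2 : Lp ℝ ⊤ ρ) :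
    Integrable (fun x => h1 x * h2 x) ρ := by
  refine Integrable.bdd_mul (c := ‖h1‖) (aux_linfty_int h2) (Lp.aestronglyMeasurable h1) ?_
  filter_upwards [aux_linfty_ae h1] with x hx
  simpa [Real.norm_eq_abs] using hx

lemma aux_sq_int [IsFiniteMeasure ρ] (h : Lp ℝ ⊤ ρ) :
    Integrable (fun x => (h x) ^ 2) ρ := by
  simpa [pow_two] using aux_mul_int h h

lemma aux_coeFn_sum {ι : Type*} (s : Finset ι) (g : ι → Lp ℝ ⊤ ρ) :
    ⇑(∑ i ∈ s, g i) =ᵐ[ρ] fun x => ∑ i ∈ s, g i x := by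
  classical
  induction s using Finset.induction_on with
  | empty => rw [Finset.sum_empty]; exact Lp.coeFn_zero (E := ℝ) (p := ⊤) (μ := ρ)
  | insert a s' hni ih =>
    rw [Finset.sum_insert hni]
    filter_upwards [Lp.coeFn_add (g a) (∑ i ∈ s', g i), ih] with x hx1 hx2
    simp only [Finset.sum_insert hni, hx1, Pi.add_apply, hx2]

lemma aux_coeFn_smul_sum {ι : Type*} (s : Finset ι) (c : ι → ℝ) (g : ι → Lp ℝ ⊤ ρ) :
    ⇑(∑ i ∈ s, c i • g i) =ᵐ[ρ] fun x => ∑ i ∈ s, c i * g i x := by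
  classical
  induction s using Finset.induction_on with
  | empty => rw [Finset.sum_empty]; exact Lp.coeFn_zero (E := ℝ) (p := ⊤) (μ := ρ)
  | insert a s' hni ih =>
    rw [Finset.sum_insert hni]
    filter_upwards [Lp.coeFn_add (c a • g a) (∑ i ∈ s', c i • g i),
      Lp.coeFn_smul (c a) (g a), ih] with x hx1 hx2 hx3
    simp only [Finset.sum_insert hni, hx1, Pi.add_apply, hx2, hx3, Pi.smul_apply,
      smul_eq_mul]

-- pointwise density lemma
lemma aux_dense_bound {E : Type*} [NormedAddCommGroup E] [InnerProductSpace ℝ E]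
    {s : Set E} (hs : Dense s) {M : ℝ} (hM : 0 ≤ M) (v : E)
    (hb : ∀ c ∈ s, |inner ℝ c v| ≤ M * ‖c‖) : ‖v‖ ≤ M := by
  have hC : ∀ c : E, |(inner ℝ c v : ℝ)| ≤ M * ‖c‖ := by
    intro c
    have hclosed : IsClosed {c : E | |(inner ℝ c v : ℝ)| ≤ M * ‖c‖} := by
      apply isClosed_le
      · exact (continuous_id.inner continuous_const).abs
      · exact continuous_const.mul continuous_norm
    have : (Set.univ : Set E) ⊆ closure s := by rw [hs.closure_eq]
    have h2 : closure s ⊆ {c : E | |(inner ℝ c v : ℝ)| ≤ M * ‖c‖} :=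
      closure_minimal hb hclosed
    exact h2 (this (Set.mem_univ c))
  have := hC v
  rw [real_inner_self_eq_norm_sq] at this
  rcases eq_or_lt_of_le (norm_nonneg v) with h0 | h0
  · simpa [← h0] using hM
  · have : ‖v‖ * ‖v‖ ≤ M * ‖v‖ := by rw [abs_of_nonneg (by positivity)] at this; nlinarith
    exact le_of_mul_le_mul_right this h0

lemma aux_int_expand [IsProbabilityMeasure ρ] (K : ℕ) (g : Fin K → Lp ℝ ⊤ ρ)
    (a : Fin K → ℝ) (σv : Fin K → ℝ)
    (horth : ∀ i l, i ≠ l → ∫ x, g i x * g l x ∂ρ = 0)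
    (hdiag : ∀ i, ∫ x, (g i x) ^ 2 ∂ρ = σv i ^ 2) :
    ∫ x, ((∑ i, a i • g i : Lp ℝ ⊤ ρ) x) ^ 2 ∂ρ = ∑ i, a i ^ 2 * σv i ^ 2 := by
  classical
  have hcongr : ∫ x, ((∑ i, a i • g i : Lp ℝ ⊤ ρ) x) ^ 2 ∂ρ
      = ∫ x, (∑ i, a i * g i x) ^ 2 ∂ρ := by
    apply integral_congr_ae
    filter_upwards [aux_coeFn_smul_sum univ a g] with x hx
    rw [hx]
  rw [hcongr]
  have hexp : ∀ x : D, (∑ i, a i * g i x) ^ 2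
      = ∑ i, ∑ l, (a i * a l) * (g i x * g l x) := by
    intro x
    rw [pow_two, Finset.sum_mul_sum]
    apply Finset.sum_congr rfl; intro i _
    apply Finset.sum_congr rfl; intro l _
    ring
  simp_rw [hexp]
  have hint : ∀ i l : Fin K, Integrable (fun x => (a i * a l) * (g i x * g l x)) ρ :=
    fun i l => (aux_mul_int (g i) (g l)).const_mul _
  rw [integral_finset_sum _ (fun i _ => integrable_finset_sum _ (fun l _ => hint i l))]
  have : ∀ i : Fin K, ∫ x, ∑ l, (a i * a l) * (g i x * g l x) ∂ρ = a i ^ 2 * σv i ^ 2 := by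
    intro i
    rw [integral_finset_sum _ (fun l _ => hint i l)]
    have : ∀ l : Fin K, ∫ x, (a i * a l) * (g i x * g l x) ∂ρ
        = (a i * a l) * ∫ x, g i x * g l x ∂ρ := fun l => integral_const_mul _ _
    simp_rw [this]
    rw [Finset.sum_eq_single i]
    · have : ∫ x, g i x * g i x ∂ρ = σv i ^ 2 := by
        rw [← hdiag i]; apply integral_congr_ae; filter_upwards with x; ring_nf
      rw [this]; ring
    · intro l _ hli
      rw [horth i l (Ne.symm hli)]; ring
    · intro h; exact absurd (mem_univ i) h
  simp_rw [this]

lemma aux_claimA (ρ : Measure D) [IsProbabilityMeasure ρ]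
    {H : Type*} [NormedAddCommGroup H] [InnerProductSpace ℝ H]
    (ψ : ℕ → H) (hψ : Orthonormal ℝ ψ)
    (J : H →L[ℝ] Lp ℝ ⊤ ρ)
    (horth : ∀ k l : ℕ, k ≠ l → ∫ x, (J (ψ k)) x * (J (ψ l)) x ∂ρ = 0)
    (σ : ℕ → ℝ) (hσ : ∀ k, σ k = Real.sqrt (∫ x, ((J (ψ k)) x) ^ 2 ∂ρ))
    (hmono : Antitone σ)
    (n : ℕ) (L : Fin n → H →L[ℝ] ℝ) (m : ℕ) (ε : ℝ) (hε : 0 < ε) :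
    ∃ f : H, ‖f‖ ≤ 1 ∧ (∀ i, L i f = 0) ∧
      (∑ k ∈ Ico n (n + m), σ k ^ 2) - ε ≤ ‖J f‖ ^ 2 := by
  classical
  set T : ℝ := ∑ k ∈ Ico n (n + m), σ k ^ 2 with hT
  by_cases hTε : T - ε ≤ 0
  · exact ⟨0, by simp, fun i => by simp, by simpa using hTε⟩
  push_neg at hTε
  set K := n + m with hK
  -- basic facts about σ
  have hσ0 : ∀ k, 0 ≤ σ k := fun k => (hσ k) ▸ Real.sqrt_nonneg _
  have hdiag : ∀ k : ℕ, ∫ x, ((J (ψ k)) x) ^ 2 ∂ρ = σ k ^ 2 := by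
    intro k
    rw [hσ k, Real.sq_sqrt (integral_nonneg fun x => sq_nonneg _)]
  -- the null space orthonormal family
  obtain ⟨d, e, hd, he_orth, he_ker, he_coef⟩ := aux_basis ψ hψ n m L
  choose a ha using he_coef
  have hψK : Orthonormal ℝ (fun i : Fin K => ψ (i : ℕ)) := hψ.comp _ Fin.val_injective
  -- integral of squares of J e j
  have hJe : ∀ j, ∫ x, ((J (e j)) x) ^ 2 ∂ρ = ∑ i : Fin K, (a j i) ^ 2 * σ (i : ℕ) ^ 2 := by
    intro j
    have hmap : J (e j) = ∑ i : Fin K, a j i • J (ψ (i : ℕ)) := by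
      rw [← ha j, map_sum]
      simp [_root_.map_smul]
      rfl
    rw [hmap]
    exact aux_int_expand K (fun i => J (ψ (i : ℕ))) (a j) (fun i => σ (i : ℕ))
      (fun i l hil => horth _ _ (fun hv => hil (Fin.val_injective hv)))
      (fun i => hdiag _)
  -- inner ℝ products
  have hinner : ∀ (j : Fin d) (i : Fin K), (inner ℝ (ψ (i : ℕ)) (e j) : ℝ) = a j i := by
    intro j i
    rw [← ha j]
    exact hψK.inner_right_sum (a j) (mem_univ i)
  -- t function
  set t : ℕ → ℝ := fun k => ∑ j : Fin d, ((inner ℝ (ψ k) (e j) : ℝ)) ^ 2 with ht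
  have ht0 : ∀ k, 0 ≤ t k := fun k => Finset.sum_nonneg fun j _ => sq_nonneg _
  have ht1 : ∀ k, t k ≤ 1 := by
    intro k
    have hb := he_orth.sum_inner_products_le (𝕜 := ℝ) (s := univ) (ψ k)
    have hψn : ‖ψ k‖ = 1 := hψ.1 k
    rw [hψn, one_pow] at hb
    refine le_trans (le_of_eq ?_) hb
    apply Finset.sum_congr rfl
    intro j _
    rw [real_inner_comm, Real.norm_eq_abs, sq_abs]
  have hejsq : ∀ j : Fin d, ∑ i : Fin K, (a j i) ^ 2 = 1 := by
    intro j
    have h1 : (inner ℝ (e j) (e j) : ℝ) = ∑ i : Fin K, a j i * a j i := by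
      rw [← ha j]
      simpa using hψK.inner_sum (a j) (a j) univ
    have h2 : (inner ℝ (e j) (e j) : ℝ) = 1 := by
      rw [real_inner_self_eq_norm_sq, he_orth.1 j, one_pow]
    rw [h1] at h2
    rw [← h2]
    apply Finset.sum_congr rfl
    intros
    rw [pow_two]
  have hinner_sum : ∀ j : Fin d,
      ∑ k ∈ range K, (inner ℝ (ψ k) (e j) : ℝ) ^ 2 = 1 := by
    intro j
    rw [← Fin.sum_univ_eq_sum_range (fun k => (inner ℝ (ψ k) (e j) : ℝ) ^ 2) K]
    rw [← hejsq j]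
    apply Finset.sum_congr rfl
    intro i _
    rw [hinner j i]
  have htsum : ∑ k ∈ range K, t k = d := by
    rw [ht]
    rw [Finset.sum_comm]
    simp only [hinner_sum]
    simp
  -- trace inequality
  have htrace : T ≤ ∑ j : Fin d, ∫ x, ((J (e j)) x) ^ 2 ∂ρ := by
    have h1 : T ≤ ∑ k ∈ range K, t k * σ k ^ 2 := by
      rw [hT]
      apply aux_sum_ineq n m σ hmono hσ0 t ht0 ht1
      rw [htsum]
      exact_mod_cast hd
    have h2 : ∑ k ∈ range K, t k * σ k ^ 2 = ∑ j : Fin d, ∫ x, ((J (e j)) x) ^ 2 ∂ρ := by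
      simp only [hJe]
      rw [← Fin.sum_univ_eq_sum_range (fun k => t k * σ k ^ 2) K]
      have hh : ∀ i : Fin K, t ↑i * σ ↑i ^ 2 = ∑ j : Fin d, a j i ^ 2 * σ ↑i ^ 2 := by
        intro i
        rw [ht]
        simp only []
        rw [Finset.sum_mul]
        apply Finset.sum_congr rfl
        intro j _
        rw [hinner j i]
      rw [Finset.sum_congr rfl (fun i _ => hh i)]
      exact Finset.sum_comm
    linarith
  -- main contradiction argument
  by_contra hcon
  push_neg at hcon
  set M : ℝ := Real.sqrt (T - ε) with hM
  have hM0 : 0 ≤ M := Real.sqrt_nonneg _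
  have hMsq : M ^ 2 = T - ε := Real.sq_sqrt hTε.le
  have hbound : ∀ f : H, ‖f‖ ≤ 1 → (∀ i, L i f = 0) → ‖J f‖ ≤ M := by
    intro f h1 h2
    have h3 := hcon f h1 h2
    by_contra h4
    push_neg at h4
    nlinarith [norm_nonneg (J f)]
  -- Euclidean space setup
  set G : D → EuclideanSpace ℝ (Fin d) :=
    fun x => (WithLp.equiv 2 (Fin d → ℝ)).symm (fun j => (J (e j)) x) with hG
  have hGapp : ∀ (x : D) (j : Fin d), G x j = (J (e j)) x := fun x j => rfl
  -- homogeneous a.e. bound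
  have hae : ∀ c : EuclideanSpace ℝ (Fin d), ∀ᵐ x ∂ρ, |(inner ℝ c (G x) : ℝ)| ≤ M * ‖c‖ := by
    intro c
    rcases eq_or_ne c 0 with hc0 | hc0
    · filter_upwards with x
      simp [hc0]
    have hcpos : 0 < ‖c‖ := norm_pos_iff.2 hc0
    set fc : H := ∑ j : Fin d, c j • e j with hfc
    have hfcnorm : ‖fc‖ = ‖c‖ := by
      have h1 : (inner ℝ fc fc : ℝ) = ∑ j : Fin d, c j * c j := by
        simpa using he_orth.inner_sum (fun j => c j) (fun j => c j) univ
      have h2 : ‖fc‖ ^ 2 = ‖c‖ ^ 2 := by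
        rw [← real_inner_self_eq_norm_sq, h1, ← real_inner_self_eq_norm_sq]
        rw [PiLp.inner_apply]
        simp [RCLike.inner_apply, pow_two]
      have := congrArg Real.sqrt h2
      rwa [Real.sqrt_sq (norm_nonneg _), Real.sqrt_sq (norm_nonneg _)] at this
    have hfcL : ∀ i, L i fc = 0 := by
      intro i
      rw [hfc, map_sum]
      simp [he_ker _ i]
    set f' : H := ‖c‖⁻¹ • fc with hf'
    have hf'norm : ‖f'‖ ≤ 1 := by
      rw [hf', norm_smul, hfcnorm, norm_inv, norm_norm]
      rw [inv_mul_cancel₀ (ne_of_gt hcpos)]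
    have hf'L : ∀ i, L i f' = 0 := by
      intro i
      rw [hf', _root_.map_smul, hfcL i, smul_zero]
    have hJf' : ‖J f'‖ ≤ M := hbound f' hf'norm hf'L
    have hmap : J fc = ∑ j : Fin d, c j • J (e j) := by
      rw [hfc, map_sum]; simp [_root_.map_smul]
    have hsmul : J f' = ‖c‖⁻¹ • J fc := by rw [hf', _root_.map_smul]
    filter_upwards [aux_linfty_ae (J f'), Lp.coeFn_smul (‖c‖⁻¹) (J fc),
      aux_coeFn_smul_sum univ (fun j => c j) (fun j => J (e j))] with x hx1 hx2 hx3
    have hval : (J f') x = ‖c‖⁻¹ * (J fc) x := by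
      rw [hsmul] at hx1 ⊢
      rw [hx2]; simp
    have hfcval : (J fc) x = (inner ℝ c (G x) : ℝ) := by
      rw [hmap, hx3, PiLp.inner_apply]
      simp [RCLike.inner_apply, hGapp]
      exact Finset.sum_congr rfl fun i _ => mul_comm _ _
    have : |(J f') x| ≤ M := le_trans hx1 hJf'
    rw [hval, hfcval, abs_mul, abs_inv, abs_norm] at this
    calc |(inner ℝ c (G x) : ℝ)| = ‖c‖ * (‖c‖⁻¹ * |(inner ℝ c (G x) : ℝ)|) := by
          field_simp
      _ ≤ ‖c‖ * M := by
          apply mul_le_mul_of_nonneg_left this (norm_nonneg c)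
      _ = M * ‖c‖ := mul_comm _ _
  -- density argument
  have hGae : ∀ᵐ x ∂ρ, ‖G x‖ ≤ M := by
    obtain ⟨s, hsc, hsd⟩ := TopologicalSpace.exists_countable_dense (EuclideanSpace ℝ (Fin d))
    have h1 : ∀ᵐ x ∂ρ, ∀ c ∈ s, |(inner ℝ c (G x) : ℝ)| ≤ M * ‖c‖ :=
      (MeasureTheory.ae_ball_iff hsc).2 fun c _ => hae c
    filter_upwards [h1] with x hx
    exact aux_dense_bound hsd hM0 (G x) hx
  -- integrals
  have hGnormsq : ∀ x : D, ‖G x‖ ^ 2 = ∑ j : Fin d, ((J (e j)) x) ^ 2 := by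
    intro x
    rw [EuclideanSpace.norm_eq]
    rw [Real.sq_sqrt (Finset.sum_nonneg fun j _ => sq_nonneg _)]
    apply Finset.sum_congr rfl
    intro j _
    rw [hGapp, Real.norm_eq_abs, sq_abs]
  have hint : Integrable (fun x => ‖G x‖ ^ 2) ρ := by
    simp_rw [hGnormsq]
    exact integrable_finset_sum _ fun j _ => aux_sq_int (J (e j))
  have hsum_int : ∫ x, ‖G x‖ ^ 2 ∂ρ = ∑ j : Fin d, ∫ x, ((J (e j)) x) ^ 2 ∂ρ := by
    simp_rw [hGnormsq]
    exact integral_finset_sum _ fun j _ => aux_sq_int (J (e j))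
  have hintle : ∫ x, ‖G x‖ ^ 2 ∂ρ ≤ T - ε := by
    have h1 : ∫ x, ‖G x‖ ^ 2 ∂ρ ≤ ∫ _ : D, M ^ 2 ∂ρ := by
      apply integral_mono_ae hint (integrable_const _)
      filter_upwards [hGae] with x hx
      exact pow_le_pow_left₀ (norm_nonneg _) hx 2
    rw [integral_const] at h1
    simp only [probReal_univ, one_smul] at h1
    linarith [hMsq]
  rw [hsum_int] at hintle
  linarith [htrace, hε]


end Aux

open Finset in
/-- Lower bound for deterministic `L∞(ρ)`-approximation on the
unit ball of a separable Hilbert space `H` continuously embedded in `L∞(ρ)` by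
`J`: if the images `J ψ_k` of an orthonormal basis are pairwise orthogonal in
`L₂(ρ)` with nonincreasing singular values `σ_k = ‖J ψ_k‖_{L₂(ρ)}`, then any
deterministic method using `n` continuous linear functionals has worst-case
error at least `√(Σ_{k ≥ n} σ_k²)` (the tail after removing the `n` largest
singular values). -/
theorem stmt7
    {D : Type*} [MeasurableSpace D] (ρ : Measure D) [IsProbabilityMeasure ρ]
    {H : Type*} [NormedAddCommGroup H] [InnerProductSpace ℝ H]
    (ψ : HilbertBasis ℕ ℝ H)
    (J : H →L[ℝ] Lp ℝ ⊤ ρ) (hJinj : Function.Injective J)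
    (horth : ∀ k l : ℕ, k ≠ l → ∫ x, (J (ψ k)) x * (J (ψ l)) x ∂ρ = 0)
    (σ : ℕ → ℝ) (hσ : ∀ k, σ k = Real.sqrt (∫ x, ((J (ψ k)) x) ^ 2 ∂ρ))
    (hmono : Antitone σ)
    (n : ℕ) (L : Fin n → H →L[ℝ] ℝ) (φ : (Fin n → ℝ) → Lp ℝ ⊤ ρ) :
    (∑' k : ℕ, ENNReal.ofReal (σ (n + k) ^ 2)) ^ (1/2 : ℝ)
      ≤ ⨆ (f : H) (_ : ‖f‖ ≤ 1),
          ENNReal.ofReal ‖J f - φ (fun i => L i f)‖ := by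
  classical
  set E : ℝ≥0∞ := ⨆ (f : H) (_ : ‖f‖ ≤ 1), ENNReal.ofReal ‖J f - φ (fun i => L i f)‖ with hE
  -- Claim B
  have hB : ∀ f : H, ‖f‖ ≤ 1 → (∀ i, L i f = 0) → ENNReal.ofReal ‖J f‖ ≤ E := by
    intro f hf hL0
    have hz1 : (fun i => L i f) = (fun _ => (0 : ℝ)) := funext fun i => hL0 i
    have hz2 : (fun i => L i (-f)) = (fun _ => (0 : ℝ)) := funext fun i => by
      rw [map_neg, hL0 i, neg_zero]
    set z := φ (fun _ => (0 : ℝ)) with hzdef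
    have hmax : ‖J f‖ ≤ max ‖J f - z‖ ‖J (-f) - z‖ := by
      have h1 : (J f - z) - (J (-f) - z) = (2 : ℝ) • J f := by
        rw [map_neg]; module
      have h2 : ‖(J f - z) - (J (-f) - z)‖ ≤ ‖J f - z‖ + ‖J (-f) - z‖ := norm_sub_le _ _
      rw [h1, norm_smul] at h2
      simp only [Real.norm_ofNat] at h2
      rcases le_total ‖J f - z‖ ‖J (-f) - z‖ with h | h
      · rw [max_eq_right h]; linarith
      · rw [max_eq_left h]; linarith
    have hle1 : ENNReal.ofReal ‖J f - z‖ ≤ E := by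
      rw [hE]
      refine le_trans ?_ (le_iSup_of_le f (le_iSup_of_le hf le_rfl))
      rw [hz1]
    have hle2 : ENNReal.ofReal ‖J (-f) - z‖ ≤ E := by
      rw [hE]
      refine le_trans ?_ (le_iSup_of_le (-f) (le_iSup_of_le (by rwa [norm_neg]) le_rfl))
      rw [hz2]
    calc ENNReal.ofReal ‖J f‖ ≤ ENNReal.ofReal (max ‖J f - z‖ ‖J (-f) - z‖) :=
          ENNReal.ofReal_le_ofReal hmax
      _ ≤ max (ENNReal.ofReal ‖J f - z‖) (ENNReal.ofReal ‖J (-f) - z‖) := by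
          rcases le_total ‖J f - z‖ ‖J (-f) - z‖ with h | h
          · rw [max_eq_right h]; exact le_max_right _ _
          · rw [max_eq_left h]; exact le_max_left _ _
      _ ≤ E := max_le hle1 hle2
  -- key bound
  have key : (∑' k : ℕ, ENNReal.ofReal (σ (n + k) ^ 2)) ≤ E ^ (2 : ℕ) := by
    rw [ENNReal.tsum_eq_iSup_nat]
    apply iSup_le
    intro m
    set T : ℝ := ∑ k ∈ Ico n (n + m), σ k ^ 2 with hT
    have hconv : ∑ a ∈ range m, ENNReal.ofReal (σ (n + a) ^ 2) = ENNReal.ofReal T := by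
      rw [ENNReal.ofReal_sum_of_nonneg (fun k _ => sq_nonneg _), Finset.sum_Ico_eq_sum_range]
      simp
    rw [hconv]
    -- limiting argument
    have hstep : ∀ j : ℕ, ENNReal.ofReal (T - 1 / (j + 1)) ≤ E ^ (2 : ℕ) := by
      intro j
      have hpos : (0 : ℝ) < 1 / (j + 1) := by positivity
      obtain ⟨f, hf1, hf2, hf3⟩ := aux_claimA ρ ψ ψ.orthonormal J horth σ hσ hmono n L m _ hpos
      calc ENNReal.ofReal (T - 1 / (j + 1)) ≤ ENNReal.ofReal (‖J f‖ ^ 2) :=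
            ENNReal.ofReal_le_ofReal hf3
        _ = (ENNReal.ofReal ‖J f‖) ^ (2 : ℕ) := ENNReal.ofReal_pow (norm_nonneg _) 2
        _ ≤ E ^ (2 : ℕ) := by
            gcongr
            exact hB f hf1 hf2
    have hlim : Filter.Tendsto (fun j : ℕ => ENNReal.ofReal (T - 1 / (j + 1)))
        Filter.atTop (nhds (ENNReal.ofReal T)) := by
      apply ENNReal.tendsto_ofReal
      have h1 : Filter.Tendsto (fun j : ℕ => 1 / ((j : ℝ) + 1)) Filter.atTop (nhds 0) :=
        tendsto_one_div_add_atTop_nhds_zero_nat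
      have := Filter.Tendsto.sub (tendsto_const_nhds (x := T)) h1
      simpa using this
    exact le_of_tendsto hlim (Filter.Eventually.of_forall hstep)
  -- conclude
  calc (∑' k : ℕ, ENNReal.ofReal (σ (n + k) ^ 2)) ^ (1/2 : ℝ)
      ≤ (E ^ (2 : ℕ)) ^ (1/2 : ℝ) := ENNReal.rpow_le_rpow key (by norm_num)
    _ = E := by
        rw [← ENNReal.rpow_natCast E 2, ← ENNReal.rpow_mul]
        norm_num
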